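/- Let ζ = exp(2πi/5) ∈ ℂ. Then (1 + ζ²)^5 = -(11 - 5·√5)/2. -/

import Mathlib

open Complex

theorem stmt_1 :
    (1 + Complex.exp (2 * Real.pi * Complex.I / 5) ^ 2) ^ 5 =
      -((11 - 5 * (Real.sqrt 5 : ℂ)) / 2) := by
  set ζ : ℂ := Complex.exp (2 * Real.pi * Complex.I / 5) with hζ
  have harg : 2 * Real.pi * Complex.I / 5 = ((2 * Real.pi / 5 : ℝ) : ℂ) * Complex.I := by
    push_cast; ring
  have hζ5 : ζ ^ 5 = 1 := by
    rw [hζ, ← Complex.exp_nat_mul]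
    have : (5 : ℕ) * (2 * Real.pi * Complex.I / 5) = 2 * Real.pi * Complex.I := by
      push_cast; ring
    rw [this, Complex.exp_two_pi_mul_I]
  have hζ1 : ζ ≠ 1 := by
    intro h
    have him : ζ.im = Real.sin (2 * Real.pi / 5) := by
      rw [hζ, harg, Complex.exp_ofReal_mul_I_im]
    have hpos : 0 < Real.sin (2 * Real.pi / 5) := by
      apply Real.sin_pos_of_pos_of_lt_pi
      · positivity
      · nlinarith [Real.pi_pos]
    rw [h] at him
    simp at him
    linarith [him ▸ hpos]
  have hsum : 1 + ζ + ζ ^ 2 + ζ ^ 3 + ζ ^ 4 = 0 := by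
    have h := hζ5
    have hne : ζ - 1 ≠ 0 := sub_ne_zero.mpr hζ1
    have : (ζ - 1) * (1 + ζ + ζ ^ 2 + ζ ^ 3 + ζ ^ 4) = 0 := by
      linear_combination hζ5
    rcases mul_eq_zero.mp this with h' | h'
    · exact absurd h' hne
    · exact h'
  have hcos : Real.cos (2 * Real.pi / 5) = (Real.sqrt 5 - 1) / 4 := by
    have h2 : 2 * Real.pi / 5 = 2 * (Real.pi / 5) := by ring
    rw [h2, Real.cos_two_mul, Real.cos_pi_div_five]
    have h5 : Real.sqrt 5 ^ 2 = 5 := Real.sq_sqrt (by norm_num)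
    nlinarith [h5]
  have hre : ζ.re = Real.cos (2 * Real.pi / 5) := by
    rw [hζ, harg, Complex.exp_ofReal_mul_I_re]
  have habs : ‖ζ‖ = 1 := by
    rw [hζ, harg, Complex.norm_exp_ofReal_mul_I]
  have hconj : starRingEnd ℂ ζ = ζ ^ 4 := by
    have h1 : ζ * starRingEnd ℂ ζ = 1 := by
      rw [Complex.mul_conj]
      norm_cast
      rw [← Complex.sq_norm, habs]
      norm_num
    have hζne : ζ ≠ 0 := by
      intro h; rw [h] at habs; simp at habs
    have : ζ * ζ ^ 4 = 1 := by rw [← pow_succ']; exact hζ5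
    calc starRingEnd ℂ ζ = starRingEnd ℂ ζ * (ζ * ζ ^ 4) := by rw [this]; ring
    _ = (ζ * starRingEnd ℂ ζ) * ζ ^ 4 := by ring
    _ = ζ ^ 4 := by rw [h1]; ring
  have hc : ζ + ζ ^ 4 = ((Real.sqrt 5 : ℂ) - 1) / 2 := by
    rw [← hconj, Complex.add_conj, hre, hcos]
    push_cast
    ring
  have h5c : ((Real.sqrt 5 : ℝ) : ℂ) = (Real.sqrt 5 : ℂ) := rfl
  linear_combination (10 * ζ + 5 * ζ ^ 3 + ζ ^ 5 + 1) * hζ5 + 5 * hsum + 5 * hc
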